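/- Let p be an odd prime and U the F_p-vector space with basis u₁,…,u₆. Let K² ⊆ Λ²U^∨ be the subspace spanned by u₁^∨∧u₂^∨ − u₄^∨∧u₅^∨, u₂^∨∧u₃^∨ − u₅^∨∧u₆^∨, u₁^∨∧u₄^∨, u₂^∨∧u₅^∨, u₃^∨∧u₆^∨, u₄^∨∧u₆^∨. Then the orthogonal complement (K²)^⊥ ⊆ Λ²U is spanned by its decomposable elements (elements of the form u∧v with u,v ∈ U); equivalently, K²_max = K², where K²_max is the orthogonal of the subgroup of (K²)^⊥ generated by decomposable bivectors. -/

import Mathlib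

open ExteriorAlgebra

set_option maxHeartbeats 1000000
set_option synthInstance.maxHeartbeats 400000

/-- The alternating `k`-form `f₁ ∧ ⋯ ∧ f_k` determined by a family of linear forms,
`(v₁,…,v_k) ↦ ∑_{σ} ε(σ) ∏ f_i(v_{σ(i)})`. -/
noncomputable def altOfFamily {R U : Type*} [CommRing R] [AddCommGroup U] [Module R U]
    {k : ℕ} (f : Fin k → Module.Dual R U) : U [⋀^Fin k]→ₗ[R] R :=
  MultilinearMap.alternatization ((MultilinearMap.mkPiAlgebra R (Fin k) R).compLinearMap f)

/-- The linear functional on the exterior algebra determined by an alternating `k`-form,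
vanishing in all other degrees. -/
noncomputable def dualPiece {R U : Type*} [CommRing R] [AddCommGroup U] [Module R U]
    (k : ℕ) (A : U [⋀^Fin k]→ₗ[R] R) : Module.Dual R (ExteriorAlgebra R U) :=
  ExteriorAlgebra.liftAlternating (fun i => if h : i = k then h.symm ▸ A else 0)

/-- The functional `u_a^∨ ∧ u_b^∨` on the exterior algebra of `U = (𝔽_p)⁶`. -/
noncomputable def dw2 (p : ℕ) (a b : Fin 6) :
    Module.Dual (ZMod p) (ExteriorAlgebra (ZMod p) (Fin 6 → ZMod p)) :=
  dualPiece 2 (altOfFamily ![LinearMap.proj a, LinearMap.proj b])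

section Helpers

variable {R U : Type*} [CommRing R] [AddCommGroup U] [Module R U]

lemma ι_anticomm (x y : U) : ι R y * ι R x = -(ι R x * ι R y) := by
  have h := ι_sq_zero (R := R) (x + y)
  rw [map_add, add_mul, mul_add, mul_add, ι_sq_zero, ι_sq_zero, zero_add, add_zero] at h
  exact eq_neg_of_add_eq_zero_right h

lemma ι_expand (u : Fin 6 → R) :
    ι R u = ∑ a, u a • ι R (Pi.single a (1:R) : Fin 6 → R) := by
  have : u = ∑ a, u a • (Pi.single a (1:R) : Fin 6 → R) := by
    simp_rw [← Pi.single_smul, smul_eq_mul, mul_one]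
    exact (Finset.univ_sum_single u).symm
  conv_lhs => rw [this]
  rw [map_sum]
  simp

/-- the basis bivector `u_a ∧ u_b` -/
noncomputable def wedge (R : Type*) [CommRing R] (a b : Fin 6) :
    ExteriorAlgebra R (Fin 6 → R) :=
  ι R (Pi.single a (1:R) : Fin 6 → R) * ι R (Pi.single b (1:R) : Fin 6 → R)

lemma dualPiece_two_apply (A : U [⋀^Fin 2]→ₗ[R] R) (u v : U) :
    dualPiece 2 A (ι R u * ι R v) = A ![u, v] := by
  rw [dualPiece, liftAlternating_ι_mul, liftAlternating_ι]
  simp [AlternatingMap.curryLeft_apply_apply]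

lemma perm_fin_two : (Finset.univ : Finset (Equiv.Perm (Fin 2))) = {1, Equiv.swap 0 1} := by
  decide

lemma altOfFamily_two_apply (f g : Module.Dual R U) (u v : U) :
    altOfFamily ![f, g] ![u, v] = f u * g v - f v * g u := by
  rw [altOfFamily, MultilinearMap.alternatization_apply, perm_fin_two,
    Finset.sum_pair (by decide)]
  have h1 : Equiv.Perm.sign (1 : Equiv.Perm (Fin 2)) = 1 := by decide
  have h2 : Equiv.Perm.sign (Equiv.swap (0:Fin 2) 1) = -1 := by decide
  simp [h1, h2, Equiv.swap_apply_left, Equiv.swap_apply_right, sub_eq_add_neg]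

lemma alt_swap (A : U [⋀^Fin 2]→ₗ[R] R) (x y : U) : A ![y, x] = -A ![x, y] := by
  have h := A.map_swap ![x, y] (by decide : (0 : Fin 2) ≠ 1)
  rw [← h]
  congr 1
  funext i
  fin_cases i <;> simp [Equiv.swap_apply_left, Equiv.swap_apply_right]

lemma dualPiece_zero (k : ℕ) : dualPiece k (0 : U [⋀^Fin k]→ₗ[R] R) = 0 := by
  unfold dualPiece
  rw [← map_zero (ExteriorAlgebra.liftAlternating (R := R) (M := U) (N := R))]
  congr 1
  funext i
  by_cases h : i = k
  · subst h; simp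
  · simp [h]

lemma dualPiece_add (k : ℕ) (A B : U [⋀^Fin k]→ₗ[R] R) :
    dualPiece k (A + B) = dualPiece k A + dualPiece k B := by
  unfold dualPiece
  rw [← map_add]
  congr 1
  funext i
  by_cases h : i = k
  · subst h; simp
  · simp [h]

lemma dualPiece_smul (k : ℕ) (r : R) (A : U [⋀^Fin k]→ₗ[R] R) :
    dualPiece k (r • A) = r • dualPiece k A := by
  unfold dualPiece
  rw [← map_smul]
  congr 1
  funext i
  by_cases h : i = k
  · subst h; simp
  · simp [h]

end Helpers

section ZModHelpers

variable (p : ℕ)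

lemma dw2_apply (c d : Fin 6) (u v : Fin 6 → ZMod p) :
    dw2 p c d (ι (ZMod p) u * ι (ZMod p) v) = u c * v d - u d * v c := by
  rw [dw2, dualPiece_two_apply, altOfFamily_two_apply]
  simp only [LinearMap.proj_apply]
  ring

lemma dw2_wedge (c d a b : Fin 6) :
    dw2 p c d (wedge (ZMod p) a b) =
      (if c = a then 1 else 0) * (if d = b then 1 else 0)
        - (if d = a then 1 else 0) * (if c = b then 1 else 0) := by
  rw [wedge, dw2_apply]
  simp [Pi.single_apply]

lemma prod_mem_power (u v : Fin 6 → ZMod p) :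
    ι (ZMod p) u * ι (ZMod p) v ∈ ⋀[ZMod p]^2 (Fin 6 → ZMod p) := by
  rw [show (⋀[ZMod p]^2 (Fin 6 → ZMod p)) =
      LinearMap.range (ι (ZMod p) : (Fin 6 → ZMod p) →ₗ[ZMod p] _) *
        LinearMap.range (ι (ZMod p) : (Fin 6 → ZMod p) →ₗ[ZMod p] _) from pow_two _]
  exact Submodule.mul_mem_mul (LinearMap.mem_range_self _ u) (LinearMap.mem_range_self _ v)


lemma mul_expand {R : Type*} [CommRing R] (u v : Fin 6 → R) :
    ι R u * ι R v = (u 0 * v 1 - u 1 * v 0) • wedge R 0 1 + (u 0 * v 2 - u 2 * v 0) • wedge R 0 2 + (u 0 * v 3 - u 3 * v 0) • wedge R 0 3 + (u 0 * v 4 - u 4 * v 0) • wedge R 0 4 + (u 0 * v 5 - u 5 * v 0) • wedge R 0 5 + (u 1 * v 2 - u 2 * v 1) • wedge R 1 2 + (u 1 * v 3 - u 3 * v 1) • wedge R 1 3 + (u 1 * v 4 - u 4 * v 1) • wedge R 1 4 + (u 1 * v 5 - u 5 * v 1) • wedge R 1 5 + (u 2 * v 3 - u 3 * v 2) • wedge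 R 2 3 + (u 2 * v 4 - u 4 * v 2) • wedge R 2 4 + (u 2 * v 5 - u 5 * v 2) • wedge R 2 5 + (u 3 * v 4 - u 4 * v 3) • wedge R 3 4 + (u 3 * v 5 - u 5 * v 3) • wedge R 3 5 + (u 4 * v 5 - u 5 * v 4) • wedge R 4 5 := by
  have h10 : ι R (Pi.single (1:Fin 6) (1:R) : Fin 6 → R) * ι R (Pi.single (0:Fin 6) (1:R) : Fin 6 → R) = -(ι R (Pi.single (0:Fin 6) (1:R) : Fin 6 → R) * ι R (Pi.single (1:Fin 6) (1:R) : Fin 6 → R)) := ι_anticomm _ _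
  have h20 : ι R (Pi.single (2:Fin 6) (1:R) : Fin 6 → R) * ι R (Pi.single (0:Fin 6) (1:R) : Fin 6 → R) = -(ι R (Pi.single (0:Fin 6) (1:R) : Fin 6 → R) * ι R (Pi.single (2:Fin 6) (1:R) : Fin 6 → R)) := ι_anticomm _ _
  have h30 : ι R (Pi.single (3:Fin 6) (1:R) : Fin 6 → R) * ι R (Pi.single (0:Fin 6) (1:R) : Fin 6 → R) = -(ι R (Pi.single (0:Fin 6) (1:R) : Fin 6 → R) * ι R (Pi.single (3:Fin 6) (1:R) : Fin 6 → R)) := ι_anticomm _ _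
  have h40 : ι R (Pi.single (4:Fin 6) (1:R) : Fin 6 → R) * ι R (Pi.single (0:Fin 6) (1:R) : Fin 6 → R) = -(ι R (Pi.single (0:Fin 6) (1:R) : Fin 6 → R) * ι R (Pi.single (4:Fin 6) (1:R) : Fin 6 → R)) := ι_anticomm _ _
  have h50 : ι R (Pi.single (5:Fin 6) (1:R) : Fin 6 → R) * ι R (Pi.single (0:Fin 6) (1:R) : Fin 6 → R) = -(ι R (Pi.single (0:Fin 6) (1:R) : Fin 6 → R) * ι R (Pi.single (5:Fin 6) (1:R) : Fin 6 → R)) := ι_anticomm _ _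
  have h21 : ι R (Pi.single (2:Fin 6) (1:R) : Fin 6 → R) * ι R (Pi.single (1:Fin 6) (1:R) : Fin 6 → R) = -(ι R (Pi.single (1:Fin 6) (1:R) : Fin 6 → R) * ι R (Pi.single (2:Fin 6) (1:R) : Fin 6 → R)) := ι_anticomm _ _
  have h31 : ι R (Pi.single (3:Fin 6) (1:R) : Fin 6 → R) * ι R (Pi.single (1:Fin 6) (1:R) : Fin 6 → R) = -(ι R (Pi.single (1:Fin 6) (1:R) : Fin 6 → R) * ι R (Pi.single (3:Fin 6) (1:R) : Fin 6 → R)) := ι_anticomm _ _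
  have h41 : ι R (Pi.single (4:Fin 6) (1:R) : Fin 6 → R) * ι R (Pi.single (1:Fin 6) (1:R) : Fin 6 → R) = -(ι R (Pi.single (1:Fin 6) (1:R) : Fin 6 → R) * ι R (Pi.single (4:Fin 6) (1:R) : Fin 6 → R)) := ι_anticomm _ _
  have h51 : ι R (Pi.single (5:Fin 6) (1:R) : Fin 6 → R) * ι R (Pi.single (1:Fin 6) (1:R) : Fin 6 → R) = -(ι R (Pi.single (1:Fin 6) (1:R) : Fin 6 → R) * ι R (Pi.single (5:Fin 6) (1:R) : Fin 6 → R)) := ι_anticomm _ _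
  have h32 : ι R (Pi.single (3:Fin 6) (1:R) : Fin 6 → R) * ι R (Pi.single (2:Fin 6) (1:R) : Fin 6 → R) = -(ι R (Pi.single (2:Fin 6) (1:R) : Fin 6 → R) * ι R (Pi.single (3:Fin 6) (1:R) : Fin 6 → R)) := ι_anticomm _ _
  have h42 : ι R (Pi.single (4:Fin 6) (1:R) : Fin 6 → R) * ι R (Pi.single (2:Fin 6) (1:R) : Fin 6 → R) = -(ι R (Pi.single (2:Fin 6) (1:R) : Fin 6 → R) * ι R (Pi.single (4:Fin 6) (1:R) : Fin 6 → R)) := ι_anticomm _ _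
  have h52 : ι R (Pi.single (5:Fin 6) (1:R) : Fin 6 → R) * ι R (Pi.single (2:Fin 6) (1:R) : Fin 6 → R) = -(ι R (Pi.single (2:Fin 6) (1:R) : Fin 6 → R) * ι R (Pi.single (5:Fin 6) (1:R) : Fin 6 → R)) := ι_anticomm _ _
  have h43 : ι R (Pi.single (4:Fin 6) (1:R) : Fin 6 → R) * ι R (Pi.single (3:Fin 6) (1:R) : Fin 6 → R) = -(ι R (Pi.single (3:Fin 6) (1:R) : Fin 6 → R) * ι R (Pi.single (4:Fin 6) (1:R) : Fin 6 → R)) := ι_anticomm _ _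
  have h53 : ι R (Pi.single (5:Fin 6) (1:R) : Fin 6 → R) * ι R (Pi.single (3:Fin 6) (1:R) : Fin 6 → R) = -(ι R (Pi.single (3:Fin 6) (1:R) : Fin 6 → R) * ι R (Pi.single (5:Fin 6) (1:R) : Fin 6 → R)) := ι_anticomm _ _
  have h54 : ι R (Pi.single (5:Fin 6) (1:R) : Fin 6 → R) * ι R (Pi.single (4:Fin 6) (1:R) : Fin 6 → R) = -(ι R (Pi.single (4:Fin 6) (1:R) : Fin 6 → R) * ι R (Pi.single (5:Fin 6) (1:R) : Fin 6 → R)) := ι_anticomm _ _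
  rw [ι_expand u, ι_expand v, Finset.sum_mul_sum]
  simp only [smul_mul_assoc, mul_smul_comm, wedge, Fin.sum_univ_six, ι_sq_zero,
    h10, h20, h30, h40, h50, h21, h31, h41, h51, h32, h42, h52, h43, h53, h54]
  module

lemma mem_expand (x : ExteriorAlgebra (ZMod p) (Fin 6 → ZMod p))
    (hx : x ∈ ⋀[ZMod p]^2 (Fin 6 → ZMod p)) :
    x = dw2 p 0 1 x • wedge (ZMod p) 0 1 + dw2 p 0 2 x • wedge (ZMod p) 0 2 + dw2 p 0 3 x • wedge (ZMod p) 0 3 + dw2 p 0 4 x • wedge (ZMod p) 0 4 + dw2 p 0 5 x • wedge (ZMod p) 0 5 + dw2 p 1 2 x • wedge (ZMod p) 1 2 + dw2 p 1 3 x • wedge (ZMod p) 1 3 + dw2 p 1 4 x • wedge (ZMod p) 1 4 + dw2 p 1 5 x • wedge (ZMod p) 1 5 + dw2 p 2 3 x • wedge (ZMod p) 2 3 + dw2 p 2 4 x • wedge (ZMod p) 2 4 + dw2 p 2 5 x • wedge (ZMod p) 2 5 + dw2 p 3 4 x • wedge (ZMod p) 3 4 + dw2 p 3 5 x • wedge (ZMod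 p) 3 5 + dw2 p 4 5 x • wedge (ZMod p) 4 5 := by
  replace hx : x ∈ LinearMap.range (ι (ZMod p) : (Fin 6 → ZMod p) →ₗ[ZMod p] _) *
      LinearMap.range (ι (ZMod p) : (Fin 6 → ZMod p) →ₗ[ZMod p] _) := by
    rw [← sq]; exact hx
  refine Submodule.mul_induction_on hx (fun m hm n hn => ?_) (fun a b ha hb => ?_)
  · obtain ⟨u, rfl⟩ := hm
    obtain ⟨v, rfl⟩ := hn
    simp only [dw2_apply]
    exact mul_expand u v
  · conv_lhs => rw [ha, hb]
    simp only [map_add]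
    module

lemma mem_coannK (x : ExteriorAlgebra (ZMod p) (Fin 6 → ZMod p))
    (h1 : (dw2 p 0 1 - dw2 p 3 4) x = 0) (h2 : (dw2 p 1 2 - dw2 p 4 5) x = 0)
    (h3 : dw2 p 0 3 x = 0) (h4 : dw2 p 1 4 x = 0) (h5 : dw2 p 2 5 x = 0)
    (h6 : dw2 p 3 5 x = 0) :
    x ∈ (Submodule.span (ZMod p)
      ({dw2 p 0 1 - dw2 p 3 4, dw2 p 1 2 - dw2 p 4 5,
        dw2 p 0 3, dw2 p 1 4, dw2 p 2 5, dw2 p 3 5} : Set (Module.Dual (ZMod p)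
        (ExteriorAlgebra (ZMod p) (Fin 6 → ZMod p))))).dualCoannihilator := by
  rw [Submodule.mem_dualCoannihilator]
  intro φ hφ
  induction hφ using Submodule.span_induction with
  | mem g hg =>
    simp only [Set.mem_insert_iff, Set.mem_singleton_iff] at hg
    rcases hg with rfl | rfl | rfl | rfl | rfl | rfl <;> assumption
  | zero => simp
  | add f g _ _ hf hg => simp [hf, hg]
  | smul a f _ hf => simp [hf]

end ZModHelpers

set_option maxHeartbeats 4000000 in
lemma alt_decomp (p : ℕ) (A : (Fin 6 → ZMod p) [⋀^Fin 2]→ₗ[ZMod p] ZMod p) :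
    A = A ![(Pi.single 0 1 : Fin 6 → ZMod p), Pi.single 1 1] • altOfFamily ![LinearMap.proj 0, LinearMap.proj 1] + A ![(Pi.single 0 1 : Fin 6 → ZMod p), Pi.single 2 1] • altOfFamily ![LinearMap.proj 0, LinearMap.proj 2] + A ![(Pi.single 0 1 : Fin 6 → ZMod p), Pi.single 3 1] • altOfFamily ![LinearMap.proj 0, LinearMap.proj 3] + A ![(Pi.single 0 1 : Fin 6 → ZMod p), Pi.single 4 1] • altOfFamily ![LinearMap.proj 0, LinearMap.proj 4] + A ![(Pi.single 0 1 : Fin 6 → ZMod p), Pi.single 5 1] • altOfFamily ![LinearMap.proj 0, LinearMap.proj 5] + A ![(Pi.single 1 1 : Fin 6 → ZMod p), Pi.single 2 1] • altOfFamily ![LinearMap.proj 1, LinearMap.proj 2] + A ![(Pi.single 1 1 : Fin 6 → ZMod p), Pi.single 3 1] • altOfFamily ![LinearMap.proj 1, LinearMap.proj 3] + A ![(Pi.single 1 1 : Fin 6 → ZMod p), Pi.single 4 1] • altOfFamily ![LinearMap.proj 1, LinearMap.proj 4] + A ![(Pi.single 1 1 : Fin 6 → ZMod p), Pi.single 5 1]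 • altOfFamily ![LinearMap.proj 1, LinearMap.proj 5] + A ![(Pi.single 2 1 : Fin 6 → ZMod p), Pi.single 3 1] • altOfFamily ![LinearMap.proj 2, LinearMap.proj 3] + A ![(Pi.single 2 1 : Fin 6 → ZMod p), Pi.single 4 1] • altOfFamily ![LinearMap.proj 2, LinearMap.proj 4] + A ![(Pi.single 2 1 : Fin 6 → ZMod p), Pi.single 5 1] • altOfFamily ![LinearMap.proj 2, LinearMap.proj 5] + A ![(Pi.single 3 1 : Fin 6 → ZMod p), Pi.single 4 1] • altOfFamily ![LinearMap.proj 3, LinearMap.proj 4] + A ![(Pi.single 3 1 : Fin 6 → ZMod p), Pi.single 5 1] • altOfFamily ![LinearMap.proj 3, LinearMap.proj 5] + A ![(Pi.single 4 1 : Fin 6 → ZMod p), Pi.single 5 1] • altOfFamily ![LinearMap.proj 4, LinearMap.proj 5] := by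
  apply Module.Basis.ext_alternating (Pi.basisFun (ZMod p) (Fin 6))
  intro v hv
  have hfun : (fun i => (Pi.basisFun (ZMod p) (Fin 6)) (v i))
      = ![(Pi.single (v 0) 1 : Fin 6 → ZMod p), Pi.single (v 1) 1] := by
    funext i
    fin_cases i <;> simp [Pi.basisFun_apply]
  rw [hfun]
  have hab : v 0 ≠ v 1 := fun h => absurd (hv h) (by decide)
  revert hab
  generalize v 0 = a
  generalize v 1 = b
  intro hab
  simp only [AlternatingMap.add_apply, AlternatingMap.smul_apply, altOfFamily_two_apply,
    LinearMap.proj_apply, Pi.single_apply, smul_eq_mul]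
  fin_cases a <;> fin_cases b <;>
    first
      | exact absurd rfl hab
      | (simp (config := { decide := true })
         try rw [alt_swap])

set_option maxHeartbeats 4000000 in
theorem stmt12 (p : ℕ) [Fact p.Prime] (hodd : Odd p)
    (K2 : Submodule (ZMod p) (Module.Dual (ZMod p)
      (ExteriorAlgebra (ZMod p) (Fin 6 → ZMod p))))
    (hK2 : K2 = Submodule.span (ZMod p)
      {dw2 p 0 1 - dw2 p 3 4, dw2 p 1 2 - dw2 p 4 5,
        dw2 p 0 3, dw2 p 1 4, dw2 p 2 5, dw2 p 3 5})
    (S2 : Submodule (ZMod p) (ExteriorAlgebra (ZMod p) (Fin 6 → ZMod p)))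
    (hS2 : S2 = ⋀[ZMod p]^2 (Fin 6 → ZMod p) ⊓ K2.dualCoannihilator)
    (S2dec : Submodule (ZMod p) (ExteriorAlgebra (ZMod p) (Fin 6 → ZMod p)))
    (hS2dec : S2dec = Submodule.span (ZMod p)
      {x | x ∈ S2 ∧ ∃ u v : Fin 6 → ZMod p, x = ι (ZMod p) u * ι (ZMod p) v}) :
    S2dec = S2 ∧
    (Submodule.span (ZMod p)
        {φ | ∃ A : (Fin 6 → ZMod p) [⋀^Fin 2]→ₗ[ZMod p] ZMod p, φ = dualPiece 2 A}
      ⊓ S2dec.dualAnnihilator) = K2 := by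
  have hins : ∀ (u v : Fin 6 → ZMod p),
      (dw2 p 0 1 - dw2 p 3 4) (ι (ZMod p) u * ι (ZMod p) v) = 0 →
      (dw2 p 1 2 - dw2 p 4 5) (ι (ZMod p) u * ι (ZMod p) v) = 0 →
      dw2 p 0 3 (ι (ZMod p) u * ι (ZMod p) v) = 0 →
      dw2 p 1 4 (ι (ZMod p) u * ι (ZMod p) v) = 0 →
      dw2 p 2 5 (ι (ZMod p) u * ι (ZMod p) v) = 0 →
      dw2 p 3 5 (ι (ZMod p) u * ι (ZMod p) v) = 0 →
      ι (ZMod p) u * ι (ZMod p) v ∈ S2dec := by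
    intro u v h1 h2 h3 h4 h5 h6
    rw [hS2dec]
    refine Submodule.subset_span ⟨?_, u, v, rfl⟩
    rw [hS2]
    exact ⟨prod_mem_power p u v, by rw [hK2]; exact mem_coannK p _ h1 h2 h3 h4 h5 h6⟩
  have hw02 : wedge (ZMod p) 0 2 ∈ S2dec :=
    hins _ _ (by (simp only [LinearMap.sub_apply, dw2_apply]; simp (config := { decide := true }) [Pi.single_apply])) (by (simp only [LinearMap.sub_apply, dw2_apply]; simp (config := { decide := true }) [Pi.single_apply])) (by (simp only [LinearMap.sub_apply, dw2_apply]; simp (config := { decide := true }) [Pi.single_apply]))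
      (by (simp only [LinearMap.sub_apply, dw2_apply]; simp (config := { decide := true }) [Pi.single_apply])) (by (simp only [LinearMap.sub_apply, dw2_apply]; simp (config := { decide := true }) [Pi.single_apply])) (by (simp only [LinearMap.sub_apply, dw2_apply]; simp (config := { decide := true }) [Pi.single_apply]))
  have hw04 : wedge (ZMod p) 0 4 ∈ S2dec :=
    hins _ _ (by (simp only [LinearMap.sub_apply, dw2_apply]; simp (config := { decide := true }) [Pi.single_apply])) (by (simp only [LinearMap.sub_apply, dw2_apply]; simp (config := { decide := true }) [Pi.single_apply])) (by (simp only [LinearMap.sub_apply, dw2_apply]; simp (config := { decide := true }) [Pi.single_apply]))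
      (by (simp only [LinearMap.sub_apply, dw2_apply]; simp (config := { decide := true }) [Pi.single_apply])) (by (simp only [LinearMap.sub_apply, dw2_apply]; simp (config := { decide := true }) [Pi.single_apply])) (by (simp only [LinearMap.sub_apply, dw2_apply]; simp (config := { decide := true }) [Pi.single_apply]))
  have hw05 : wedge (ZMod p) 0 5 ∈ S2dec :=
    hins _ _ (by (simp only [LinearMap.sub_apply, dw2_apply]; simp (config := { decide := true }) [Pi.single_apply])) (by (simp only [LinearMap.sub_apply, dw2_apply]; simp (config := { decide := true }) [Pi.single_apply])) (by (simp only [LinearMap.sub_apply, dw2_apply]; simp (config := { decide := true }) [Pi.single_apply]))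
      (by (simp only [LinearMap.sub_apply, dw2_apply]; simp (config := { decide := true }) [Pi.single_apply])) (by (simp only [LinearMap.sub_apply, dw2_apply]; simp (config := { decide := true }) [Pi.single_apply])) (by (simp only [LinearMap.sub_apply, dw2_apply]; simp (config := { decide := true }) [Pi.single_apply]))
  have hw13 : wedge (ZMod p) 1 3 ∈ S2dec :=
    hins _ _ (by (simp only [LinearMap.sub_apply, dw2_apply]; simp (config := { decide := true }) [Pi.single_apply])) (by (simp only [LinearMap.sub_apply, dw2_apply]; simp (config := { decide := true }) [Pi.single_apply])) (by (simp only [LinearMap.sub_apply, dw2_apply]; simp (config := { decide := true }) [Pi.single_apply]))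
      (by (simp only [LinearMap.sub_apply, dw2_apply]; simp (config := { decide := true }) [Pi.single_apply])) (by (simp only [LinearMap.sub_apply, dw2_apply]; simp (config := { decide := true }) [Pi.single_apply])) (by (simp only [LinearMap.sub_apply, dw2_apply]; simp (config := { decide := true }) [Pi.single_apply]))
  have hw15 : wedge (ZMod p) 1 5 ∈ S2dec :=
    hins _ _ (by (simp only [LinearMap.sub_apply, dw2_apply]; simp (config := { decide := true }) [Pi.single_apply])) (by (simp only [LinearMap.sub_apply, dw2_apply]; simp (config := { decide := true }) [Pi.single_apply])) (by (simp only [LinearMap.sub_apply, dw2_apply]; simp (config := { decide := true }) [Pi.single_apply]))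
      (by (simp only [LinearMap.sub_apply, dw2_apply]; simp (config := { decide := true }) [Pi.single_apply])) (by (simp only [LinearMap.sub_apply, dw2_apply]; simp (config := { decide := true }) [Pi.single_apply])) (by (simp only [LinearMap.sub_apply, dw2_apply]; simp (config := { decide := true }) [Pi.single_apply]))
  have hw23 : wedge (ZMod p) 2 3 ∈ S2dec :=
    hins _ _ (by (simp only [LinearMap.sub_apply, dw2_apply]; simp (config := { decide := true }) [Pi.single_apply])) (by (simp only [LinearMap.sub_apply, dw2_apply]; simp (config := { decide := true }) [Pi.single_apply])) (by (simp only [LinearMap.sub_apply, dw2_apply]; simp (config := { decide := true }) [Pi.single_apply]))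
      (by (simp only [LinearMap.sub_apply, dw2_apply]; simp (config := { decide := true }) [Pi.single_apply])) (by (simp only [LinearMap.sub_apply, dw2_apply]; simp (config := { decide := true }) [Pi.single_apply])) (by (simp only [LinearMap.sub_apply, dw2_apply]; simp (config := { decide := true }) [Pi.single_apply]))
  have hw24 : wedge (ZMod p) 2 4 ∈ S2dec :=
    hins _ _ (by (simp only [LinearMap.sub_apply, dw2_apply]; simp (config := { decide := true }) [Pi.single_apply])) (by (simp only [LinearMap.sub_apply, dw2_apply]; simp (config := { decide := true }) [Pi.single_apply])) (by (simp only [LinearMap.sub_apply, dw2_apply]; simp (config := { decide := true }) [Pi.single_apply]))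
      (by (simp only [LinearMap.sub_apply, dw2_apply]; simp (config := { decide := true }) [Pi.single_apply])) (by (simp only [LinearMap.sub_apply, dw2_apply]; simp (config := { decide := true }) [Pi.single_apply])) (by (simp only [LinearMap.sub_apply, dw2_apply]; simp (config := { decide := true }) [Pi.single_apply]))
  have hx1 : ι (ZMod p) ((Pi.single 0 1 + Pi.single 3 1 : Fin 6 → ZMod p)) * ι (ZMod p) ((Pi.single 1 1 + Pi.single 4 1 : Fin 6 → ZMod p)) ∈ S2dec :=
    hins _ _ (by (simp only [LinearMap.sub_apply, dw2_apply]; simp (config := { decide := true }) [Pi.single_apply])) (by (simp only [LinearMap.sub_apply, dw2_apply]; simp (config := { decide := true }) [Pi.single_apply])) (by (simp only [LinearMap.sub_apply, dw2_apply]; simp (config := { decide := true }) [Pi.single_apply]))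
      (by (simp only [LinearMap.sub_apply, dw2_apply]; simp (config := { decide := true }) [Pi.single_apply])) (by (simp only [LinearMap.sub_apply, dw2_apply]; simp (config := { decide := true }) [Pi.single_apply])) (by (simp only [LinearMap.sub_apply, dw2_apply]; simp (config := { decide := true }) [Pi.single_apply]))
  have hy1 : ι (ZMod p) ((Pi.single 1 1 + Pi.single 4 1 : Fin 6 → ZMod p)) * ι (ZMod p) ((Pi.single 2 1 + Pi.single 5 1 : Fin 6 → ZMod p)) ∈ S2dec :=
    hins _ _ (by (simp only [LinearMap.sub_apply, dw2_apply]; simp (config := { decide := true }) [Pi.single_apply])) (by (simp only [LinearMap.sub_apply, dw2_apply]; simp (config := { decide := true }) [Pi.single_apply])) (by (simp only [LinearMap.sub_apply, dw2_apply]; simp (config := { decide := true }) [Pi.single_apply]))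
      (by (simp only [LinearMap.sub_apply, dw2_apply]; simp (config := { decide := true }) [Pi.single_apply])) (by (simp only [LinearMap.sub_apply, dw2_apply]; simp (config := { decide := true }) [Pi.single_apply])) (by (simp only [LinearMap.sub_apply, dw2_apply]; simp (config := { decide := true }) [Pi.single_apply]))
  have hgA : wedge (ZMod p) 0 1 + wedge (ZMod p) 3 4 ∈ S2dec := by
    have hid : wedge (ZMod p) 0 1 + wedge (ZMod p) 3 4 = (ι (ZMod p) ((Pi.single 0 1 + Pi.single 3 1 : Fin 6 → ZMod p)) * ι (ZMod p) ((Pi.single 1 1 + Pi.single 4 1 : Fin 6 → ZMod p))) - wedge (ZMod p) 0 4 + wedge (ZMod p) 1 3 := by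
      rw [mul_expand]
      simp (config := { decide := true }) [Pi.single_apply]
      module
    rw [hid]
    exact Submodule.add_mem _ (Submodule.sub_mem _ hx1 hw04) hw13
  have hgB : wedge (ZMod p) 1 2 + wedge (ZMod p) 4 5 ∈ S2dec := by
    have hid : wedge (ZMod p) 1 2 + wedge (ZMod p) 4 5 = (ι (ZMod p) ((Pi.single 1 1 + Pi.single 4 1 : Fin 6 → ZMod p)) * ι (ZMod p) ((Pi.single 2 1 + Pi.single 5 1 : Fin 6 → ZMod p))) - wedge (ZMod p) 1 5 + wedge (ZMod p) 2 4 := by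
      rw [mul_expand]
      simp (config := { decide := true }) [Pi.single_apply]
      module
    rw [hid]
    exact Submodule.add_mem _ (Submodule.sub_mem _ hy1 hw15) hw24
  have part1 : S2dec = S2 := by
    apply le_antisymm
    · rw [hS2dec]
      exact Submodule.span_le.mpr (fun x hx => hx.1)
    · intro x hx
      rw [hS2] at hx
      obtain ⟨hxp, hxc⟩ := hx
      rw [hK2] at hxc
      replace hxc := (Submodule.mem_dualCoannihilator x).mp hxc
      have e1 : (dw2 p 0 1 - dw2 p 3 4) x = 0 := hxc _ (Submodule.subset_span (Set.mem_insert _ _))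
      have e2 : (dw2 p 1 2 - dw2 p 4 5) x = 0 := hxc _ (Submodule.subset_span (Set.mem_insert_of_mem _ (Set.mem_insert _ _)))
      have e3 : dw2 p 0 3 x = 0 := hxc _ (Submodule.subset_span (Set.mem_insert_of_mem _ (Set.mem_insert_of_mem _ (Set.mem_insert _ _))))
      have e4 : dw2 p 1 4 x = 0 := hxc _ (Submodule.subset_span (Set.mem_insert_of_mem _ (Set.mem_insert_of_mem _ (Set.mem_insert_of_mem _ (Set.mem_insert _ _)))))
      have e5 : dw2 p 2 5 x = 0 := hxc _ (Submodule.subset_span (Set.mem_insert_of_mem _ (Set.mem_insert_of_mem _ (Set.mem_insert_of_mem _ (Set.mem_insert_of_mem _ (Set.mem_insert _ _))))))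
      have e6 : dw2 p 3 5 x = 0 := hxc _ (Submodule.subset_span (Set.mem_insert_of_mem _ (Set.mem_insert_of_mem _ (Set.mem_insert_of_mem _ (Set.mem_insert_of_mem _ (Set.mem_insert_of_mem _ (Set.mem_singleton _)))))))
      have e1' : dw2 p 3 4 x = dw2 p 0 1 x := by
        rw [LinearMap.sub_apply, sub_eq_zero] at e1; exact e1.symm
      have e2' : dw2 p 4 5 x = dw2 p 1 2 x := by
        rw [LinearMap.sub_apply, sub_eq_zero] at e2; exact e2.symm
      have hx3 : x = dw2 p 0 1 x • (wedge (ZMod p) 0 1 + wedge (ZMod p) 3 4) + dw2 p 1 2 x • (wedge (ZMod p) 1 2 + wedge (ZMod p) 4 5) + dw2 p 0 2 x • wedge (ZMod p) 0 2 + dw2 p 0 4 x • wedge (ZMod p) 0 4 + dw2 p 0 5 x • wedge (ZMod p) 0 5 + dw2 p 1 3 x • wedge (ZMod p) 1 3 + dw2 p 1 5 x • wedge (ZMod p) 1 5 + dw2 p 2 3 x • wedge (ZMod p) 2 3 + dw2 p 2 4 x • wedge (ZMod p) 2 4 := by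
        conv_lhs => rw [mem_expand p x hxp]
        rw [e1', e2', e3, e4, e5, e6]
        module
      rw [hx3]
      exact (Submodule.add_mem _ (Submodule.add_mem _ (Submodule.add_mem _ (Submodule.add_mem _ (Submodule.add_mem _ (Submodule.add_mem _ (Submodule.add_mem _ (Submodule.add_mem _ (Submodule.smul_mem _ _ hgA) (Submodule.smul_mem _ _ hgB)) (Submodule.smul_mem _ _ hw02)) (Submodule.smul_mem _ _ hw04)) (Submodule.smul_mem _ _ hw05)) (Submodule.smul_mem _ _ hw13)) (Submodule.smul_mem _ _ hw15)) (Submodule.smul_mem _ _ hw23)) (Submodule.smul_mem _ _ hw24))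
  refine ⟨part1, le_antisymm ?_ ?_⟩
  · intro φ hφ
    rw [Submodule.mem_inf] at hφ
    obtain ⟨hφW, hφann⟩ := hφ
    have hrange : ∀ ψ ∈ Submodule.span (ZMod p)
        {φ | ∃ A : (Fin 6 → ZMod p) [⋀^Fin 2]→ₗ[ZMod p] ZMod p, φ = dualPiece 2 A},
        ∃ A : (Fin 6 → ZMod p) [⋀^Fin 2]→ₗ[ZMod p] ZMod p, ψ = dualPiece 2 A := by
      intro ψ hψ
      induction hψ using Submodule.span_induction with
      | mem g hg => exact hg
      | zero => exact ⟨0, (dualPiece_zero 2).symm⟩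
      | add f g _ _ hf hg =>
        obtain ⟨A, rfl⟩ := hf; obtain ⟨B, rfl⟩ := hg
        exact ⟨A + B, (dualPiece_add 2 A B).symm⟩
      | smul a f _ hf =>
        obtain ⟨A, rfl⟩ := hf
        exact ⟨a • A, (dualPiece_smul 2 a A).symm⟩
    obtain ⟨A, rfl⟩ := hrange φ hφW
    have hA : dualPiece 2 A = A ![(Pi.single 0 1 : Fin 6 → ZMod p), Pi.single 1 1] • dw2 p 0 1 + A ![(Pi.single 0 1 : Fin 6 → ZMod p), Pi.single 2 1] • dw2 p 0 2 + A ![(Pi.single 0 1 : Fin 6 → ZMod p), Pi.single 3 1] • dw2 p 0 3 + A ![(Pi.single 0 1 : Fin 6 → ZMod p), Pi.single 4 1] • dw2 p 0 4 + A ![(Pi.single 0 1 : Fin 6 → ZMod p), Pi.single 5 1] • dw2 p 0 5 + A ![(Pi.single 1 1 : Fin 6 → ZMod p), Pi.single 2 1] • dw2 p 1 2 + A ![(Pi.single 1 1 : Fin 6 → ZMod p), Pi.single 3 1] • dw2 p 1 3 + A ![(Pi.single 1 1 : Fin 6 → ZMod p), Pi.single 4 1] • dw2 p 1 4 + A ![(Pi.single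 1 1 : Fin 6 → ZMod p), Pi.single 5 1] • dw2 p 1 5 + A ![(Pi.single 2 1 : Fin 6 → ZMod p), Pi.single 3 1] • dw2 p 2 3 + A ![(Pi.single 2 1 : Fin 6 → ZMod p), Pi.single 4 1] • dw2 p 2 4 + A ![(Pi.single 2 1 : Fin 6 → ZMod p), Pi.single 5 1] • dw2 p 2 5 + A ![(Pi.single 3 1 : Fin 6 → ZMod p), Pi.single 4 1] • dw2 p 3 4 + A ![(Pi.single 3 1 : Fin 6 → ZMod p), Pi.single 5 1] • dw2 p 3 5 + A ![(Pi.single 4 1 : Fin 6 → ZMod p), Pi.single 5 1] • dw2 p 4 5 := by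
      conv_lhs => rw [alt_decomp p A]
      simp only [dualPiece_add, dualPiece_smul, dw2]
    replace hφann := (Submodule.mem_dualAnnihilator _).mp hφann
    have q02 : A ![(Pi.single 0 1 : Fin 6 → ZMod p), Pi.single 2 1] = 0 := by
      have h := hφann _ hw02
      rw [hA] at h
      simp only [LinearMap.add_apply, LinearMap.smul_apply, map_add, dw2_wedge] at h
      simp (config := { decide := true }) at h
      linear_combination h
    have q04 : A ![(Pi.single 0 1 : Fin 6 → ZMod p), Pi.single 4 1] = 0 := by
      have h := hφann _ hw04
      rw [hA] at h
      simp only [LinearMap.add_apply, LinearMap.smul_apply, map_add, dw2_wedge] at h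
      simp (config := { decide := true }) at h
      linear_combination h
    have q05 : A ![(Pi.single 0 1 : Fin 6 → ZMod p), Pi.single 5 1] = 0 := by
      have h := hφann _ hw05
      rw [hA] at h
      simp only [LinearMap.add_apply, LinearMap.smul_apply, map_add, dw2_wedge] at h
      simp (config := { decide := true }) at h
      linear_combination h
    have q13 : A ![(Pi.single 1 1 : Fin 6 → ZMod p), Pi.single 3 1] = 0 := by
      have h := hφann _ hw13
      rw [hA] at h
      simp only [LinearMap.add_apply, LinearMap.smul_apply, map_add, dw2_wedge] at h
      simp (config := { decide := true }) at h
      linear_combination h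
    have q15 : A ![(Pi.single 1 1 : Fin 6 → ZMod p), Pi.single 5 1] = 0 := by
      have h := hφann _ hw15
      rw [hA] at h
      simp only [LinearMap.add_apply, LinearMap.smul_apply, map_add, dw2_wedge] at h
      simp (config := { decide := true }) at h
      linear_combination h
    have q23 : A ![(Pi.single 2 1 : Fin 6 → ZMod p), Pi.single 3 1] = 0 := by
      have h := hφann _ hw23
      rw [hA] at h
      simp only [LinearMap.add_apply, LinearMap.smul_apply, map_add, dw2_wedge] at h
      simp (config := { decide := true }) at h
      linear_combination h
    have q24 : A ![(Pi.single 2 1 : Fin 6 → ZMod p), Pi.single 4 1] = 0 := by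
      have h := hφann _ hw24
      rw [hA] at h
      simp only [LinearMap.add_apply, LinearMap.smul_apply, map_add, dw2_wedge] at h
      simp (config := { decide := true }) at h
      linear_combination h
    have qA : A ![(Pi.single 3 1 : Fin 6 → ZMod p), Pi.single 4 1] = -A ![(Pi.single 0 1 : Fin 6 → ZMod p), Pi.single 1 1] := by
      have h := hφann _ hgA
      rw [hA] at h
      simp only [LinearMap.add_apply, LinearMap.smul_apply, map_add, dw2_wedge] at h
      simp (config := { decide := true }) at h
      linear_combination h
    have qB : A ![(Pi.single 4 1 : Fin 6 → ZMod p), Pi.single 5 1] = -A ![(Pi.single 1 1 : Fin 6 → ZMod p), Pi.single 2 1] := by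
      have h := hφann _ hgB
      rw [hA] at h
      simp only [LinearMap.add_apply, LinearMap.smul_apply, map_add, dw2_wedge] at h
      simp (config := { decide := true }) at h
      linear_combination h
    have final : dualPiece 2 A = A ![(Pi.single 0 1 : Fin 6 → ZMod p), Pi.single 1 1] • (dw2 p 0 1 - dw2 p 3 4) + A ![(Pi.single 1 1 : Fin 6 → ZMod p), Pi.single 2 1] • (dw2 p 1 2 - dw2 p 4 5) + A ![(Pi.single 0 1 : Fin 6 → ZMod p), Pi.single 3 1] • dw2 p 0 3 + A ![(Pi.single 1 1 : Fin 6 → ZMod p), Pi.single 4 1] • dw2 p 1 4 + A ![(Pi.single 2 1 : Fin 6 → ZMod p), Pi.single 5 1] • dw2 p 2 5 + A ![(Pi.single 3 1 : Fin 6 → ZMod p), Pi.single 5 1] • dw2 p 3 5 := by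
      rw [hA, q02, q04, q05, q13, q15, q23, q24, qA, qB]
      module
    rw [hK2, final]
    exact (Submodule.add_mem _ (Submodule.add_mem _ (Submodule.add_mem _ (Submodule.add_mem _ (Submodule.add_mem _ (Submodule.smul_mem _ _ (Submodule.subset_span (Set.mem_insert _ _))) (Submodule.smul_mem _ _ (Submodule.subset_span (Set.mem_insert_of_mem _ (Set.mem_insert _ _))))) (Submodule.smul_mem _ _ (Submodule.subset_span (Set.mem_insert_of_mem _ (Set.mem_insert_of_mem _ (Set.mem_insert _ _)))))) (Submodule.smul_mem _ _ (Submodule.subset_span (Set.mem_insert_of_mem _ (Set.mem_insert_of_mem _ (Set.mem_insert_of_mem _ (Set.mem_insert _ _))))))) (Submodule.smul_mem _ _ (Submodule.subset_span (Set.mem_insert_of_mem _ (Set.mem_insert_of_mem _ (Set.mem_insert_of_mem _ (Set.mem_insert_of_mem _ (Set.mem_insert _ _)))))))) (Submodule.smul_mem _ _ (Submodule.subset_span (Set.mem_insert_of_mem _ (Set.mem_insert_of_mem _ (Set.mem_insert_of_mem _ (Set.mem_insert_of_mem _ (Set.mem_insert_of_mem _ (Set.mem_singleton _)))))))))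
  · rw [hK2]
    apply Submodule.span_le.mpr
    intro g hg
    refine Submodule.mem_inf.mpr ⟨?_, ?_⟩
    · simp only [Set.mem_insert_iff, Set.mem_singleton_iff] at hg
      rcases hg with rfl | rfl | rfl | rfl | rfl | rfl
      · exact Submodule.sub_mem _ (Submodule.subset_span ⟨_, rfl⟩)
          (Submodule.subset_span ⟨_, rfl⟩)
      · exact Submodule.sub_mem _ (Submodule.subset_span ⟨_, rfl⟩)
          (Submodule.subset_span ⟨_, rfl⟩)
      · exact Submodule.subset_span ⟨_, rfl⟩
      · exact Submodule.subset_span ⟨_, rfl⟩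
      · exact Submodule.subset_span ⟨_, rfl⟩
      · exact Submodule.subset_span ⟨_, rfl⟩
    · rw [Submodule.mem_dualAnnihilator]
      intro w hw
      rw [part1, hS2] at hw
      have hwc := hw.2
      rw [hK2] at hwc
      exact (Submodule.mem_dualCoannihilator w).mp hwc g (Submodule.subset_span hg)
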